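/- Define h₊ : ℝ → ℝ by h₊(x) = (1/3)·√(45x² + 24√5·x + 19 + 2·|3x+√5|·√(45x² + 18√5·x + 14)) (both inner expressions are nonnegative for all real x, so h₊ is well defined). Then: Im P(x + i·h₊(x)) = 0 for every real x; h₊(−√5/3) = 2/3, so x = −√5/3 gives the point c₊; and the left-hand derivative of h₊ at −√5/3, i.e. the limit of (h₊(x) − 2/3)/(x + √5/3) as x → −√5/3 from the left, equals −(3+√5)/2 (the slope of ℓ₊, so the curve y = h₊(x) is tangent to ℓ₊ at c₊). -/
import Mathlib


open Complex

/-- The polynomial `P(z) = z (1 + (2√5/3) z + z²)²`. -/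
noncomputable def P (z : ℂ) : ℂ :=
  z * (1 + ((2 * Real.sqrt 5 / 3 : ℝ) : ℂ) * z + z ^ 2) ^ 2

/-- `h₊(x) = (1/3)·√(45x² + 24√5 x + 19 + 2|3x+√5|·√(45x² + 18√5 x + 14))`. -/
noncomputable def hplus (x : ℝ) : ℝ :=
  1 / 3 * Real.sqrt (45 * x ^ 2 + 24 * Real.sqrt 5 * x + 19
    + 2 * |3 * x + Real.sqrt 5| * Real.sqrt (45 * x ^ 2 + 18 * Real.sqrt 5 * x + 14))

lemma hs5 : Real.sqrt 5 ^ 2 = 5 := Real.sq_sqrt (by norm_num)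

lemma part1 (x : ℝ) : 0 ≤ 45 * x ^ 2 + 18 * Real.sqrt 5 * x + 14 := by
  nlinarith [sq_nonneg (x + Real.sqrt 5 / 5), hs5, Real.sqrt_nonneg 5]

lemma part2 (x : ℝ) : 0 ≤ 45 * x ^ 2 + 24 * Real.sqrt 5 * x + 19
    + 2 * |3 * x + Real.sqrt 5| * Real.sqrt (45 * x ^ 2 + 18 * Real.sqrt 5 * x + 14) := by
  have h1 : 0 ≤ 45 * x ^ 2 + 24 * Real.sqrt 5 * x + 19 := by
    nlinarith [sq_nonneg (x + 4 * Real.sqrt 5 / 15), hs5, Real.sqrt_nonneg 5]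
  have h2 : 0 ≤ 2 * |3 * x + Real.sqrt 5| * Real.sqrt (45 * x ^ 2 + 18 * Real.sqrt 5 * x + 14) :=
    mul_nonneg (by positivity) (Real.sqrt_nonneg _)
  linarith

lemma part3 (x : ℝ) : (P ((x : ℂ) + (hplus x : ℂ) * I)).im = 0 := by
  set s := Real.sqrt 5 with hsdef
  set r := Real.sqrt (45 * x ^ 2 + 18 * s * x + 14) with hrdef
  set B := |3 * x + s| with hBdef
  set y := hplus x with hydef
  have hs : s ^ 2 = 5 := hs5
  have hr : r ^ 2 = 45 * x ^ 2 + 18 * s * x + 14 := Real.sq_sqrt (part1 x)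
  have hB : B ^ 2 = (3 * x + s) ^ 2 := sq_abs _
  have hy : y ^ 2 = 1/9 * (45 * x ^ 2 + 24 * s * x + 19 + 2 * B * r) := by
    rw [hydef, hplus, mul_pow, Real.sq_sqrt (part2 x)]
    ring
  have him : (P ((x:ℂ) + (y:ℂ) * I)).im =
      y^5 - (10*x^2 + (16/3)*s*x + 38/9)*y^3
        + (5*x^4 + (16/3)*s*x^3 + (38/3)*x^2 + (8/3)*s*x + 1)*y := by
    simp only [P]
    simp [Complex.add_im, Complex.add_re, Complex.mul_im, Complex.mul_re, Complex.ofReal_re,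
      Complex.ofReal_im, Complex.I_re, Complex.I_im, Complex.one_re, Complex.one_im,
      pow_succ, pow_zero, one_mul]
    linear_combination ((4/3)*x^2*y - (4/9)*y^3) * hs
  rw [him]
  linear_combination
    (y*(y^2 - (45*x^2+24*s*x+19)/9 + 2*B*r/9)) * hy
    + (4*B^2*y/81) * hr
    + (4*(45*x^2+18*s*x+14)*y/81) * hB
    + (y*((4/9)*x^2 + (8/9)*s*x + 56/81)) * hs

lemma part4 : hplus (-Real.sqrt 5 / 3) = 2 / 3 := by
  have habs : |3 * (-Real.sqrt 5 / 3) + Real.sqrt 5| = 0 := by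
    rw [show (3:ℝ) * (-Real.sqrt 5 / 3) + Real.sqrt 5 = 0 by ring, abs_zero]
  rw [hplus, habs]
  rw [show 45 * (-Real.sqrt 5 / 3) ^ 2 + 24 * Real.sqrt 5 * (-Real.sqrt 5 / 3) + 19
      + 2 * 0 * Real.sqrt (45 * (-Real.sqrt 5 / 3) ^ 2 + 18 * Real.sqrt 5 * (-Real.sqrt 5 / 3) + 14)
      = 4 by linear_combination (-3 : ℝ) * hs5]
  rw [show (4:ℝ) = 2 ^ 2 by norm_num, Real.sqrt_sq (by norm_num)]
  norm_num

noncomputable def Qf (x : ℝ) : ℝ := 45 * x ^ 2 + 18 * Real.sqrt 5 * x + 14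

noncomputable def Uf (x : ℝ) : ℝ :=
  45 * x ^ 2 + 24 * Real.sqrt 5 * x + 19 + 2 * |3 * x + Real.sqrt 5| * Real.sqrt (Qf x)

noncomputable def g (x : ℝ) : ℝ :=
  (45 * x + 9 * Real.sqrt 5 - 6 * Real.sqrt (Qf x)) / (3 * (Real.sqrt (Uf x) + 2))

lemma part5 :
    Filter.Tendsto (fun x : ℝ => (hplus x - 2 / 3) / (x + Real.sqrt 5 / 3))
      (nhdsWithin (-Real.sqrt 5 / 3) (Set.Iio (-Real.sqrt 5 / 3)))
      (nhds (-(3 + Real.sqrt 5) / 2)) := by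
  set x0 : ℝ := -Real.sqrt 5 / 3 with hx0
  have hQ0 : Real.sqrt (Qf x0) = 3 := by
    rw [show Qf x0 = 9 by rw [Qf, hx0]; linear_combination (-1 : ℝ) * hs5]
    rw [show (9:ℝ) = 3 ^ 2 by norm_num, Real.sqrt_sq (by norm_num)]
  have hU0 : Real.sqrt (Uf x0) = 2 := by
    have habs : |3 * x0 + Real.sqrt 5| = 0 := by
      rw [show (3:ℝ) * x0 + Real.sqrt 5 = 0 by rw [hx0]; ring, abs_zero]
    rw [show Uf x0 = 4 by rw [Uf, habs]; linear_combination (-3 : ℝ) * hs5]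
    rw [show (4:ℝ) = 2 ^ 2 by norm_num, Real.sqrt_sq (by norm_num)]
  have hgc : ContinuousAt g x0 := by
    apply ContinuousAt.div
    · simp only [Qf]; fun_prop
    · simp only [Uf, Qf]; fun_prop
    · rw [hU0]; norm_num
  have hg0 : g x0 = -(3 + Real.sqrt 5) / 2 := by
    rw [g, hQ0, hU0, hx0]; ring
  have htg : Filter.Tendsto g (nhdsWithin x0 (Set.Iio x0)) (nhds (-(3 + Real.sqrt 5) / 2)) := by
    rw [← hg0]
    exact hgc.continuousWithinAt.tendsto
  refine htg.congr' ?_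
  filter_upwards [self_mem_nhdsWithin] with x hx
  have hx' : x < x0 := hx
  have ht : x + Real.sqrt 5 / 3 < 0 := by rw [hx0] at hx'; linarith
  have habs : |3 * x + Real.sqrt 5| = -(3 * x + Real.sqrt 5) := abs_of_neg (by linarith)
  have hUnn : 0 ≤ Uf x := part2 x
  have hsqU : Real.sqrt (Uf x) ^ 2 = Uf x := Real.sq_sqrt hUnn
  have hden : (0:ℝ) < 3 * (Real.sqrt (Uf x) + 2) := by positivity
  have hfac : Uf x - 4 = (x + Real.sqrt 5 / 3) * (45 * x + 9 * Real.sqrt 5 - 6 * Real.sqrt (Qf x)) := by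
    rw [Uf, habs]; linear_combination (-3 : ℝ) * hs5
  have hh : hplus x = 1 / 3 * Real.sqrt (Uf x) := rfl
  rw [g, hh, div_eq_div_iff hden.ne' (ne_of_lt ht)]
  linear_combination (-1 : ℝ) * hsqU - hfac

theorem stmt5 :
    (∀ x : ℝ, 0 ≤ 45 * x ^ 2 + 18 * Real.sqrt 5 * x + 14) ∧
    (∀ x : ℝ, 0 ≤ 45 * x ^ 2 + 24 * Real.sqrt 5 * x + 19
        + 2 * |3 * x + Real.sqrt 5| * Real.sqrt (45 * x ^ 2 + 18 * Real.sqrt 5 * x + 14)) ∧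
    (∀ x : ℝ, (P ((x : ℂ) + (hplus x : ℂ) * I)).im = 0) ∧
    hplus (-Real.sqrt 5 / 3) = 2 / 3 ∧
    Filter.Tendsto (fun x : ℝ => (hplus x - 2 / 3) / (x + Real.sqrt 5 / 3))
      (nhdsWithin (-Real.sqrt 5 / 3) (Set.Iio (-Real.sqrt 5 / 3)))
      (nhds (-(3 + Real.sqrt 5) / 2)) := by
  exact ⟨part1, part2, part3, part4, part5⟩
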